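/- Let τ ∈ ℍ be such that 1 and τ span a lattice Γ_τ = ℤ + τℤ, and let a, b ∈ ℝ \ ℚ with 0 < a, b < 1. Consider period matrices P_a = ((0,1,τ),(1,0,a)) and P_b = ((0,1,τ),(1,0,b)). If there exist M ∈ GL(2, ℂ) and A ∈ GL(3, ℤ) with P_a = M P_b A, then the only possible A are ±I₃ and ±((1,0,1),(0,−1,0),(0,0,−1)); consequently P_a ∼ P_b if and only if a = b or a = 1 − b. -/

import Mathlib

/-- The period matrix `((0,1,τ),(1,0,a))`. -/
noncomputable def periodMatrix (τ : ℂ) (a : ℝ) : Matrix (Fin 2) (Fin 3) ℂ :=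
  !![0, 1, τ; 1, 0, (a : ℂ)]

private lemma lin_indep_irr {x : ℝ} (hx : Irrational x) {m n : ℤ}
    (h : (m : ℝ) + x * n = 0) : m = 0 ∧ n = 0 := by
  rcases eq_or_ne n 0 with hn | hn
  · subst hn
    simp only [Int.cast_zero, mul_zero, add_zero] at h
    exact ⟨by exact_mod_cast h, rfl⟩
  · exfalso
    have hx' : x = (((-m : ℚ) / (n : ℚ) : ℚ) : ℝ) := by
      have hn' : (n : ℝ) ≠ 0 := Int.cast_ne_zero.mpr hn
      push_cast
      field_simp
      linarith
    exact hx ⟨_, hx'.symm⟩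

private lemma main_lemma (τ : ℂ) (hτ : 0 < τ.im) (a b : ℝ)
    (ha : Irrational a) (hb : Irrational b)
    (ha0 : 0 < a) (ha1 : a < 1) (hb0 : 0 < b) (hb1 : b < 1)
    (M : Matrix (Fin 2) (Fin 2) ℂ) (A : Matrix (Fin 3) (Fin 3) ℤ)
    (hM : IsUnit M.det) (hA : IsUnit A.det)
    (h : periodMatrix τ a = M * periodMatrix τ b * A.map (fun x : ℤ => (x : ℂ))) :
    (A = 1 ∧ a = b) ∨ (A = -1 ∧ a = b) ∨
      (A = !![1, 0, 1; 0, -1, 0; 0, 0, -1] ∧ a = 1 - b) ∨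
      (A = -(!![1, 0, 1; 0, -1, 0; 0, 0, -1]) ∧ a = 1 - b) := by
  have hy : τ.im ≠ 0 := ne_of_gt hτ
  -- kernel vector
  have hker : (periodMatrix τ b * A.map (fun x : ℤ => (x : ℂ))).mulVec ![-(a:ℂ), -τ, 1] = 0 := by
    have hva : (periodMatrix τ a).mulVec ![-(a:ℂ), -τ, 1] = 0 := by
      funext i
      fin_cases i <;>
        simp [periodMatrix, Matrix.mulVec, dotProduct, Fin.sum_univ_three]
    rw [h, Matrix.mul_assoc, ← Matrix.mulVec_mulVec] at hva
    have := congrArg (fun w => M⁻¹.mulVec w) hva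
    simpa [Matrix.mulVec_mulVec, ← Matrix.mul_assoc, Matrix.nonsing_inv_mul M hM] using this
  have e0 := congrFun hker 0
  have e1 := congrFun hker 1
  simp [Matrix.mulVec, Matrix.mul_apply, dotProduct, Fin.sum_univ_three,
    periodMatrix, Matrix.map_apply] at e0 e1
  have r0 := congrArg Complex.re e0
  have i0 := congrArg Complex.im e0
  have r1 := congrArg Complex.re e1
  have i1 := congrArg Complex.im e1
  simp only [Complex.add_re, Complex.add_im, Complex.mul_re, Complex.mul_im,
    Complex.neg_re, Complex.neg_im, Complex.intCast_re, Complex.intCast_im,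
    Complex.ofReal_re, Complex.ofReal_im, Complex.zero_re, Complex.zero_im,
    mul_zero, zero_mul, sub_zero, zero_sub, add_zero, zero_add, neg_zero] at r0 i0 r1 i1
  -- from i1 : A 0 1 + b * A 2 1 = 0
  have i1' : ((A 0 1 : ℤ) : ℝ) + b * ((A 2 1 : ℤ) : ℝ) = 0 := by
    have := neg_eq_zero.mp i1
    rcases mul_eq_zero.mp this with h' | h'
    · exact h'
    · exact absurd h' hy
  have h0121 : A 0 1 = 0 ∧ A 2 1 = 0 := by
    apply lin_indep_irr hb
    push_cast
    push_cast at i1'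
    linarith
  obtain ⟨h01, h21⟩ := h0121
  have h01' : ((A 0 1 : ℤ) : ℝ) = 0 := by rw [h01]; simp
  have h21' : ((A 2 1 : ℤ) : ℝ) = 0 := by rw [h21]; simp
  -- from i0 : y * (A22 - A11 - A20 * a) = 0
  have key0 : ((A 2 2 - A 1 1 : ℤ) : ℝ) + a * (-(A 2 0) : ℤ) = 0 := by
    have hfac : τ.im * (((A 2 2 - A 1 1 : ℤ) : ℝ) + a * ((-(A 2 0) : ℤ) : ℝ)) = 0 := by
      push_cast
      linear_combination i0 + 2 * τ.re * τ.im * h21'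
    rcases mul_eq_zero.mp hfac with h' | h'
    · exact absurd h' hy
    · exact h'
  obtain ⟨h2211, h20⟩ := lin_indep_irr ha key0
  have h2211' : A 2 2 = A 1 1 := by omega
  have h20' : A 2 0 = 0 := by omega
  have h20'' : ((A 2 0 : ℤ) : ℝ) = 0 := by rw [h20']; simp
  have h2211'' : ((A 2 2 : ℤ) : ℝ) = ((A 1 1 : ℤ) : ℝ) := by rw [h2211']
  -- from r0 : A12 - A10 * a = 0
  have key1 : ((A 1 2 : ℤ) : ℝ) + a * (-(A 1 0) : ℤ) = 0 := by
    push_cast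
    linear_combination r0 + τ.re * a * h20'' + (τ.re ^ 2 - τ.im ^ 2) * h21' - τ.re * h2211''
  obtain ⟨h12, h10n⟩ := lin_indep_irr ha key1
  have h10 : A 1 0 = 0 := by omega
  -- from r1 : relation between a and b
  have rel : ((A 0 2 : ℤ) : ℝ) = (A 0 0 : ℤ) * a - (A 1 1 : ℤ) * b := by
    push_cast
    linear_combination r1 + a * b * h20'' + τ.re * h01' + τ.re * b * h21' - b * h2211''
  -- determinant
  rw [Matrix.det_fin_three] at hA
  rw [h01, h21, h20', h2211', h12, h10] at hA
  simp only [mul_zero, zero_mul, sub_zero, add_zero, zero_add, neg_zero, mul_neg] at hA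
  have u11 : IsUnit (A 1 1) := by
    have : IsUnit (A 0 0 * A 1 1 * A 1 1) := hA
    exact isUnit_of_mul_isUnit_right this
  have u00 : IsUnit (A 0 0) := by
    have : IsUnit (A 0 0 * A 1 1 * A 1 1) := hA
    exact isUnit_of_mul_isUnit_left (isUnit_of_mul_isUnit_left this)
  rw [Int.isUnit_iff] at u11 u00
  -- case analysis
  have hb1' : (1 : ℝ) - b > 0 := by linarith
  rcases u00 with h00 | h00 <;> rcases u11 with h11 | h11
  · -- A00 = 1, A11 = 1 : a = b, A = 1
    have h02 : A 0 2 = 0 := by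
      rw [h00, h11] at rel
      have hlt : ((A 0 2 : ℤ) : ℝ) < 1 := by rw [rel]; push_cast; linarith
      have hgt : (-1 : ℝ) < ((A 0 2 : ℤ) : ℝ) := by rw [rel]; push_cast; linarith
      have : (A 0 2 : ℤ) < 1 := by exact_mod_cast hlt
      have : (-1 : ℤ) < A 0 2 := by exact_mod_cast hgt
      omega
    have hab : a = b := by
      rw [h00, h11, h02] at rel
      push_cast at rel
      linarith
    left
    refine ⟨?_, hab⟩
    ext i j
    fin_cases i <;> fin_cases j <;>
      simp [Matrix.vecHead, Matrix.vecTail, h00, h01, h02, h10, h11, h12, h20', h21, h2211', Matrix.one_apply]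
  · -- A00 = 1, A11 = -1 : a = 1 - b, A = M0
    have h02 : A 0 2 = 1 := by
      rw [h00, h11] at rel
      have hlt : ((A 0 2 : ℤ) : ℝ) < 2 := by rw [rel]; push_cast; linarith
      have hgt : (0 : ℝ) < ((A 0 2 : ℤ) : ℝ) := by rw [rel]; push_cast; linarith
      have : (A 0 2 : ℤ) < 2 := by exact_mod_cast hlt
      have : (0 : ℤ) < A 0 2 := by exact_mod_cast hgt
      omega
    have hab : a = 1 - b := by
      rw [h00, h11, h02] at rel
      push_cast at rel
      linarith
    right; right; left
    refine ⟨?_, hab⟩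
    ext i j
    fin_cases i <;> fin_cases j <;>
      simp [Matrix.vecHead, Matrix.vecTail, h00, h01, h02, h10, h11, h12, h20', h21, h2211']
  · -- A00 = -1, A11 = 1 : a = 1 - b, A = -M0
    have h02 : A 0 2 = -1 := by
      rw [h00, h11] at rel
      have hlt : ((A 0 2 : ℤ) : ℝ) < 0 := by rw [rel]; push_cast; linarith
      have hgt : (-2 : ℝ) < ((A 0 2 : ℤ) : ℝ) := by rw [rel]; push_cast; linarith
      have : (A 0 2 : ℤ) < 0 := by exact_mod_cast hlt
      have : (-2 : ℤ) < A 0 2 := by exact_mod_cast hgt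
      omega
    have hab : a = 1 - b := by
      rw [h00, h11, h02] at rel
      push_cast at rel
      linarith
    right; right; right
    refine ⟨?_, hab⟩
    ext i j
    fin_cases i <;> fin_cases j <;>
      simp [Matrix.vecHead, Matrix.vecTail, h00, h01, h02, h10, h11, h12, h20', h21, h2211']
  · -- A00 = -1, A11 = -1 : a = b, A = -1
    have h02 : A 0 2 = 0 := by
      rw [h00, h11] at rel
      have hlt : ((A 0 2 : ℤ) : ℝ) < 1 := by rw [rel]; push_cast; linarith
      have hgt : (-1 : ℝ) < ((A 0 2 : ℤ) : ℝ) := by rw [rel]; push_cast; linarith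
      have : (A 0 2 : ℤ) < 1 := by exact_mod_cast hlt
      have : (-1 : ℤ) < A 0 2 := by exact_mod_cast hgt
      omega
    have hab : a = b := by
      rw [h00, h11, h02] at rel
      push_cast at rel
      linarith
    right; left
    refine ⟨?_, hab⟩
    ext i j
    fin_cases i <;> fin_cases j <;>
      simp [Matrix.vecHead, Matrix.vecTail, h00, h01, h02, h10, h11, h12, h20', h21, h2211', Matrix.one_apply]

/-- For `τ ∈ ℍ` and irrational `a, b ∈ (0,1)`, if
`P_a = M P_b A` with `M ∈ GL(2,ℂ)` and `A ∈ GL(3,ℤ)`, then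
`A ∈ {±I₃, ±((1,0,1),(0,−1,0),(0,0,−1))}`; consequently `P_a ∼ P_b` iff
`a = b` or `a = 1 − b`. -/
theorem stmt_10 (τ : ℂ) (hτ : 0 < τ.im) (a b : ℝ)
    (ha : Irrational a) (hb : Irrational b)
    (ha0 : 0 < a) (ha1 : a < 1) (hb0 : 0 < b) (hb1 : b < 1) :
    (∀ (M : Matrix (Fin 2) (Fin 2) ℂ) (A : Matrix (Fin 3) (Fin 3) ℤ),
        IsUnit M.det → IsUnit A.det →
        periodMatrix τ a = M * periodMatrix τ b * A.map (fun x : ℤ => (x : ℂ)) →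
        (A = 1 ∨ A = -1 ∨ A = !![1, 0, 1; 0, -1, 0; 0, 0, -1] ∨
          A = -(!![1, 0, 1; 0, -1, 0; 0, 0, -1]))) ∧
    ((∃ (M : Matrix (Fin 2) (Fin 2) ℂ) (A : Matrix (Fin 3) (Fin 3) ℤ),
        IsUnit M.det ∧ IsUnit A.det ∧
        periodMatrix τ a = M * periodMatrix τ b * A.map (fun x : ℤ => (x : ℂ)))
      ↔ (a = b ∨ a = 1 - b)) := by
  constructor
  · intro M A hM hA h
    rcases main_lemma τ hτ a b ha hb ha0 ha1 hb0 hb1 M A hM hA h with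
      ⟨h', _⟩ | ⟨h', _⟩ | ⟨h', _⟩ | ⟨h', _⟩
    · exact Or.inl h'
    · exact Or.inr (Or.inl h')
    · exact Or.inr (Or.inr (Or.inl h'))
    · exact Or.inr (Or.inr (Or.inr h'))
  · constructor
    · rintro ⟨M, A, hM, hA, h⟩
      rcases main_lemma τ hτ a b ha hb ha0 ha1 hb0 hb1 M A hM hA h with
        ⟨_, h'⟩ | ⟨_, h'⟩ | ⟨_, h'⟩ | ⟨_, h'⟩
      · exact Or.inl h'
      · exact Or.inl h'
      · exact Or.inr h'
      · exact Or.inr h'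
    · rintro (hab | hab)
      · refine ⟨1, 1, by simp, by simp, ?_⟩
        subst hab
        simp [Matrix.map_one]
      · refine ⟨!![-1, 0; 0, 1], !![1, 0, 1; 0, -1, 0; 0, 0, -1], ?_, ?_, ?_⟩
        · simp [Matrix.det_fin_two_of]
        · norm_num [Matrix.det_fin_three, Matrix.vecHead, Matrix.vecTail, Matrix.cons_val, Matrix.cons_val_two]
        · subst hab
          ext i j
          fin_cases i <;> fin_cases j <;>
            simp [periodMatrix, Matrix.mul_apply, Matrix.map_apply, Matrix.vecHead,
              Matrix.vecTail, Fin.sum_univ_three, Fin.sum_univ_two] <;>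
            push_cast <;> ring_nf
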